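/- If G is a bistable bipartite graph with at least 4 vertices, then the intersection of all perfect matchings of G (as edge sets) is empty. -/

import Mathlib

open SimpleGraph

/-- A stable (independent) set of vertices: pairwise nonadjacent. -/
def IsStableSet {V : Type*} (G : SimpleGraph V) (S : Set V) : Prop :=
  S.Pairwise fun u v => ¬ G.Adj u v

/-- The stability number `α(G)`: maximum cardinality of a stable set. -/
noncomputable def stabNum {V : Type*} (G : SimpleGraph V) : ℕ :=
  sSup {k | ∃ S : Set V, IsStableSet G S ∧ S.ncard = k}

/-- A maximum stable set. -/
def IsMaxStableSet {V : Type*} (G : SimpleGraph V) (S : Set V) : Prop :=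
  IsStableSet G S ∧ S.ncard = stabNum G

/-- `G` is α⁺-stable: adding any edge between nonadjacent vertices keeps α. -/
def AlphaPlusStable {V : Type*} (G : SimpleGraph V) : Prop :=
  ∀ x y : V, x ≠ y → ¬ G.Adj x y →
    stabNum (G ⊔ SimpleGraph.fromEdgeSet {s(x, y)}) = stabNum G

/-- `G` is α⁻-stable: deleting any edge keeps α. -/
def AlphaMinusStable {V : Type*} (G : SimpleGraph V) : Prop :=
  ∀ e ∈ G.edgeSet, stabNum (G.deleteEdges {e}) = stabNum G

/-- `G` is α-stable: both α⁺-stable and α⁻-stable. -/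
def AlphaStable {V : Type*} (G : SimpleGraph V) : Prop :=
  AlphaPlusStable G ∧ AlphaMinusStable G

/-- `{A, B}` is a bipartition of `G`. -/
def IsBipartition {V : Type*} (G : SimpleGraph V) (A B : Set V) : Prop :=
  Disjoint A B ∧ A ∪ B = Set.univ ∧
    ∀ ⦃x y⦄, G.Adj x y → (x ∈ A ∧ y ∈ B) ∨ (x ∈ B ∧ y ∈ A)

/-- `G` is bistable bipartite w.r.t. bipartition `{A, B}`:
`A` and `B` are its only maximum stable sets. -/
def BistableBipartite {V : Type*} (G : SimpleGraph V) (A B : Set V) : Prop :=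
  IsBipartition G A B ∧ ∀ S : Set V, IsMaxStableSet G S ↔ S = A ∨ S = B

/-- `G` has a perfect matching. -/
def HasPerfectMatching {V : Type*} (G : SimpleGraph V) : Prop :=
  ∃ M : G.Subgraph, M.IsPerfectMatching

/-- `X` has a `k` by `n - k` zero submatrix for some `1 ≤ k ≤ n - 1`. -/
def HasZeroSubmatrix {m : Type*} [Fintype m] (X : Matrix m m ℕ) : Prop :=
  ∃ R C : Finset m, R.Nonempty ∧ C.Nonempty ∧ R.card + C.card = Fintype.card m ∧
    ∀ i ∈ R, ∀ j ∈ C, X i j = 0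

/-- A square matrix is partly decomposable. -/
def PartlyDecomposable {m : Type*} [Fintype m] (X : Matrix m m ℕ) : Prop :=
  (Fintype.card m = 1 ∧ ∀ i j, X i j = 0) ∨ HasZeroSubmatrix X

/-- A square matrix is fully indecomposable iff it is not partly decomposable. -/
def FullyIndecomposable {m : Type*} [Fintype m] (X : Matrix m m ℕ) : Prop :=
  ¬ PartlyDecomposable X

/-- A (0,1)-matrix. -/
def ZeroOne {m k : Type*} (X : Matrix m k ℕ) : Prop :=
  ∀ i j, X i j = 0 ∨ X i j = 1

/-- The term rank: maximal number of nonzero entries, no two on a line. -/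
noncomputable def termRank {m k : Type*} [Fintype m] [Fintype k] (X : Matrix m k ℕ) : ℕ :=
  sSup {r | ∃ (f : Fin r ↪ m) (g : Fin r ↪ k), ∀ i, X (f i) (g i) ≠ 0}

/-- The permanent of a square matrix with natural entries. -/
def perm {m : Type*} [Fintype m] [DecidableEq m] (X : Matrix m m ℕ) : ℕ :=
  ∑ σ : Equiv.Perm m, ∏ i, X (σ i) i

/-- The bipartite graph whose reduced adjacency matrix is the (0,1)-matrix `X`. -/
def matGraph {ι κ : Type*} (X : Matrix ι κ ℕ) : SimpleGraph (ι ⊕ κ) :=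
  SimpleGraph.fromRel fun u v => ∃ i j, u = Sum.inl i ∧ v = Sum.inr j ∧ X i j = 1

private lemma stable_ncard_le {V : Type*} [Fintype V] (G : SimpleGraph V) {S : Set V}
    (hS : IsStableSet G S) : S.ncard ≤ stabNum G := by
  apply le_csSup
  · refine ⟨Fintype.card V, ?_⟩
    rintro k ⟨T, -, rfl⟩
    simpa [Set.ncard_univ, Nat.card_eq_fintype_card] using
      Set.ncard_le_ncard (Set.subset_univ T) Set.finite_univ
  · exact ⟨S, hS, rfl⟩

-- neighborhood of a set
private lemma notmem {V : Type*} {A B : Set V} (h : Disjoint A B) {x : V}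
    (hx : x ∈ A) (hy : x ∈ B) : False := Set.disjoint_left.mp h hx hy

private lemma nbhd_subset {V : Type*} {G : SimpleGraph V} {A B : Set V}
    (hbip : IsBipartition G A B) {S : Set V} (hSA : S ⊆ A) :
    {b | ∃ a ∈ S, G.Adj a b} ⊆ B := by
  rintro b ⟨a, haS, hab⟩
  rcases hbip.2.2 hab with ⟨_, h⟩ | ⟨h, _⟩
  · exact h
  · exact (notmem hbip.1 (hSA haS) h).elim

private lemma stable_union {V : Type*} {G : SimpleGraph V} {A B : Set V}
    (hbip : IsBipartition G A B) {S : Set V} (hSA : S ⊆ A) :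
    IsStableSet G (S ∪ (B \ {b | ∃ a ∈ S, G.Adj a b})) := by
  have hAA : ∀ ⦃x y : V⦄, x ∈ A → y ∈ A → ¬ G.Adj x y := by
    intro x y hx hy hadj
    rcases hbip.2.2 hadj with ⟨_, h⟩ | ⟨h, _⟩
    · exact notmem hbip.1 hy h
    · exact notmem hbip.1 hx h
  have hBB : ∀ ⦃x y : V⦄, x ∈ B → y ∈ B → ¬ G.Adj x y := by
    intro x y hx hy hadj
    rcases hbip.2.2 hadj with ⟨h, _⟩ | ⟨_, h⟩
    · exact notmem hbip.1 h hx
    · exact notmem hbip.1 h hy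
  rintro x (hx | hx) y (hy | hy) hne hadj
  · exact hAA (hSA hx) (hSA hy) hadj
  · exact hy.2 ⟨x, hx, hadj⟩
  · exact hx.2 ⟨y, hy, hadj.symm⟩
  · exact hBB hx.1 hy.1 hadj

private lemma bistable_A_card {V : Type*} [Fintype V] {G : SimpleGraph V} {A B : Set V}
    (hbis : BistableBipartite G A B) : A.ncard = stabNum G :=
  ((hbis.2 A).mpr (Or.inl rfl)).2

private lemma bistable_B_card {V : Type*} [Fintype V] {G : SimpleGraph V} {A B : Set V}
    (hbis : BistableBipartite G A B) : B.ncard = stabNum G :=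
  ((hbis.2 B).mpr (Or.inr rfl)).2

/-- cardinality of the union `S ∪ (B \ N)` -/
private lemma union_card {V : Type*} [Fintype V] {G : SimpleGraph V} {A B : Set V}
    (hbip : IsBipartition G A B) {S N : Set V} (hSA : S ⊆ A) (hNB : N ⊆ B) :
    (S ∪ (B \ N)).ncard = S.ncard + B.ncard - N.ncard ∧ N.ncard ≤ B.ncard := by
  have hdisj : Disjoint S (B \ N) :=
    Set.disjoint_of_subset hSA Set.diff_subset hbip.1
  have h1 : (S ∪ (B \ N)).ncard = S.ncard + (B \ N).ncard :=
    Set.ncard_union_eq hdisj (Set.toFinite _) (Set.toFinite _)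
  have h2 : (B \ N).ncard = B.ncard - N.ncard := Set.ncard_diff hNB (Set.toFinite _)
  have h3 : N.ncard ≤ B.ncard := Set.ncard_le_ncard hNB (Set.toFinite _)
  omega

private lemma hall_core {V : Type*} [Fintype V] {G : SimpleGraph V} {A B : Set V}
    (hbis : BistableBipartite G A B) {S : Set V} (hSA : S ⊆ A) :
    S.ncard ≤ {b | ∃ a ∈ S, G.Adj a b}.ncard := by
  by_contra hlt
  push_neg at hlt
  set N := {b | ∃ a ∈ S, G.Adj a b} with hN
  have hNB : N ⊆ B := nbhd_subset hbis.1 hSA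
  have hst := stable_ncard_le G (stable_union hbis.1 hSA)
  rw [← hN] at hst
  obtain ⟨hc, hle⟩ := union_card hbis.1 hSA hNB
  have hB := bistable_B_card hbis
  omega

private lemma hall_core' {V : Type*} [Fintype V] {G : SimpleGraph V} {A B : Set V}
    (hbis : BistableBipartite G A B) (hA2 : 2 ≤ stabNum G) (u v : V) {S : Set V}
    (hSA : S ⊆ A) :
    S.ncard ≤ {b | ∃ a ∈ S, G.Adj a b ∧ ¬(a = u ∧ b = v)}.ncard := by
  by_contra hlt
  rw [not_le] at hlt
  set N' := {b | ∃ a ∈ S, G.Adj a b ∧ ¬(a = u ∧ b = v)} with hN'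
  set N := {b | ∃ a ∈ S, G.Adj a b} with hN
  have hN'N : N' ⊆ N := by rintro b ⟨a, ha, hadj, -⟩; exact ⟨a, ha, hadj⟩
  have hNsub : N ⊆ insert v N' := by
    rintro b ⟨a, ha, hadj⟩
    by_cases h : a = u ∧ b = v
    · exact Or.inl h.2
    · exact Or.inr ⟨a, ha, hadj, h⟩
  have h1 : S.ncard ≤ N.ncard := hall_core hbis hSA
  have hNle : N.ncard ≤ N'.ncard + 1 :=
    le_trans (Set.ncard_le_ncard hNsub (Set.toFinite _)) (Set.ncard_insert_le _ _)
  -- v ∈ N, v ∉ N'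
  have hvN' : v ∉ N' := by
    intro hv
    have : N ⊆ N' := fun b hb => (hNsub hb).elim (fun h => h ▸ hv) id
    have : N.ncard ≤ N'.ncard := Set.ncard_le_ncard this (Set.toFinite _)
    omega
  have hvN : v ∈ N := by
    by_contra hv
    have : N ⊆ N' := fun b hb => (hNsub hb).elim (fun h => absurd (h ▸ hb) hv) id
    have : N.ncard ≤ N'.ncard := Set.ncard_le_ncard this (Set.toFinite _)
    omega
  have honly : ∀ a ∈ S, G.Adj a v → a = u := by
    intro a ha hadj
    by_contra hne
    exact hvN' ⟨a, ha, hadj, fun h => hne h.1⟩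
  obtain ⟨a₀, ha₀S, ha₀v⟩ := hvN
  have huS : u ∈ S := honly a₀ ha₀S ha₀v ▸ ha₀S
  have hNB : N ⊆ B := nbhd_subset hbis.1 hSA
  have hvB : v ∈ B := hNB ⟨a₀, ha₀S, ha₀v⟩
  -- T = S ∪ (B \ N) is a maximum stable set
  obtain ⟨hc, hle⟩ := union_card hbis.1 hSA hNB
  have hB := bistable_B_card hbis
  have hst : (S ∪ (B \ N)).ncard ≤ stabNum G := stable_ncard_le G (stable_union hbis.1 hSA)
  have hA := bistable_A_card hbis
  have hAstable : IsStableSet G A := ((hbis.2 A).mpr (Or.inl rfl)).1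
  have hTmax : IsMaxStableSet G (S ∪ (B \ N)) := ⟨stable_union hbis.1 hSA, by omega⟩
  rcases (hbis.2 _).mp hTmax with hTA | hTB
  · -- T = A
    have huA : u ∈ A := hSA huS
    have hvA : v ∉ A := fun h => notmem hbis.1.1 h hvB
    have hSeqA : S = A := by
      apply Set.Subset.antisymm hSA
      intro a haA
      have ha' : a ∈ S ∪ (B \ N) := hTA ▸ haA
      rcases ha' with h | h
      · exact h
      · exact (notmem hbis.1.1 haA h.1).elim
    have hnbr : ∀ w, G.Adj w v → w = u := by
      intro w hw
      have hwA : w ∈ A := by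
        rcases hbis.1.2.2 hw with ⟨h, _⟩ | ⟨_, h⟩
        · exact h
        · exact (notmem hbis.1.1 h hvB).elim
      exact honly w (hSeqA ▸ hwA) hw
    have hT2stable : IsStableSet G ((A \ {u}) ∪ {v}) := by
      rintro x (hx | rfl) y (hy | rfl) hne hadj
      · exact hAstable hx.1 hy.1 hne hadj
      · exact hx.2 (hnbr x hadj)
      · exact hy.2 (hnbr y hadj.symm)
      · exact hne rfl
    have hAu : (A \ {u}).ncard = A.ncard - 1 :=
      Set.ncard_diff_singleton_of_mem huA
    have hvAu : v ∉ A \ {u} := fun h => hvA h.1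
    have hT2card : ((A \ {u}) ∪ {v}).ncard = (A \ {u}).ncard + 1 := by
      rw [Set.ncard_union_eq (Set.disjoint_singleton_right.mpr hvAu)
        (Set.toFinite _) (Set.toFinite _), Set.ncard_singleton]
    have hT2max : IsMaxStableSet G ((A \ {u}) ∪ {v}) := ⟨hT2stable, by omega⟩
    rcases (hbis.2 _).mp hT2max with hT2A | hT2B
    · exact hvA (hT2A ▸ (Or.inr rfl : v ∈ (A \ {u}) ∪ {v}))
    · have hne : (A \ {u}).Nonempty := by
        apply Set.nonempty_of_ncard_ne_zero
        omega
      obtain ⟨a', ha'⟩ := hne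
      exact notmem hbis.1.1 ha'.1 (hT2B ▸ (Or.inl ha' : a' ∈ (A \ {u}) ∪ {v}))
  · -- T = B
    exact notmem hbis.1.1 (hSA huS) (hTB ▸ (Or.inl huS : u ∈ S ∪ (B \ N)))

private lemma build {V : Type*} [Fintype V] {G : SimpleGraph V} {A B : Set V}
    (hbis : BistableBipartite G A B) [DecidableEq V] (t : ↥A → Finset V)
    (hadjt : ∀ (a : ↥A), ∀ b ∈ t a, G.Adj ↑a b)
    (hhall : ∀ s : Finset ↥A, s.card ≤ (s.biUnion t).card) :
    ∃ M : G.Subgraph, M.IsPerfectMatching ∧ ∀ (a : ↥A) (y : V), M.Adj ↑a y → y ∈ t a := by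
  classical
  obtain ⟨f, hfinj, hft⟩ := (Finset.all_card_le_biUnion_card_iff_exists_injective t).mp hhall
  have hAB : ∀ x : V, x ∉ A → x ∈ B := by
    intro x hx
    have : x ∈ A ∪ B := hbis.1.2.1.symm ▸ Set.mem_univ x
    exact this.resolve_left hx
  have hfB : ∀ a : ↥A, f a ∈ B := by
    intro a
    have hadj := hadjt a (f a) (hft a)
    rcases hbis.1.2.2 hadj with ⟨_, h⟩ | ⟨h, _⟩
    · exact h
    · exact (notmem hbis.1.1 a.2 h).elim
  set g : ↥A → ↥B := fun a => ⟨f a, hfB a⟩ with hg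
  have hginj : Function.Injective g := fun a b hab => hfinj (congrArg Subtype.val hab)
  have hcard : Nat.card ↥A = Nat.card ↥B := by
    rw [Nat.card_coe_set_eq, Nat.card_coe_set_eq, bistable_A_card hbis, bistable_B_card hbis]
  have hgbij : Function.Bijective g := (Nat.bijective_iff_injective_and_card g).mpr ⟨hginj, hcard⟩
  set e := Equiv.ofBijective g hgbij with he
  set m : V → V := fun x => if h : x ∈ A then ↑(e ⟨x, h⟩) else ↑(e.symm ⟨x, hAB x h⟩) with hm
  have hmA : ∀ (x : V) (h : x ∈ A), m x = f ⟨x, h⟩ := fun x h => dif_pos h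
  have hmB : ∀ (x : V) (h : x ∉ A), m x = ↑(e.symm ⟨x, hAB x h⟩) := fun x h => dif_neg h
  have hadjm : ∀ x, G.Adj x (m x) := by
    intro x
    by_cases h : x ∈ A
    · rw [hmA x h]; exact hadjt ⟨x, h⟩ _ (hft _)
    · rw [hmB x h]
      have key : f (e.symm ⟨x, hAB x h⟩) = x := congrArg Subtype.val (e.apply_symm_apply ⟨x, hAB x h⟩)
      have := hadjt (e.symm ⟨x, hAB x h⟩) _ (hft _)
      rw [key] at this
      exact this.symm
  have hmnotA : ∀ (x : V) (h : x ∈ A), m x ∉ A := by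
    intro x h hmem
    rw [hmA x h] at hmem
    exact notmem hbis.1.1 hmem (hfB ⟨x, h⟩)
  have hinv : ∀ x, m (m x) = x := by
    intro x
    by_cases h : x ∈ A
    · have h2 := hmnotA x h
      rw [hmB _ h2]
      have : (⟨m x, hAB _ h2⟩ : ↥B) = e ⟨x, h⟩ := Subtype.ext (hmA x h)
      rw [this, Equiv.symm_apply_apply]
    · have h2 : m x ∈ A := by rw [hmB x h]; exact (e.symm ⟨x, hAB x h⟩).2
      rw [hmA _ h2]
      have : (⟨m x, h2⟩ : ↥A) = e.symm ⟨x, hAB x h⟩ := Subtype.ext (hmB x h)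
      rw [this]
      exact congrArg Subtype.val (e.apply_symm_apply ⟨x, hAB x h⟩)
  refine ⟨⟨Set.univ, fun x y => m x = y ∨ m y = x, ?_, fun {x y} _ => Set.mem_univ x, ?_⟩, ⟨?_, fun v => Set.mem_univ v⟩, ?_⟩
  · rintro x y (rfl | rfl)
    · exact hadjm x
    · exact (hadjm y).symm
  · refine ⟨?_⟩; rintro x y (h | h)
    · exact Or.inr h
    · exact Or.inl h
  · rintro v -
    refine ⟨m v, Or.inl rfl, ?_⟩
    rintro w (h | h)
    · exact h.symm
    · rw [← hinv w, h]
  · rintro a y (h | h)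
    · rw [← h, hmA _ a.2]
      simpa using hft a
    · have : y = m ↑a := by rw [← hinv y, h]
      rw [this, hmA _ a.2]
      simpa using hft a

private lemma hall_bridge {V : Type*} [Fintype V] [DecidableEq V] {A : Set V}
    (t : ↥A → Finset V) (N : Set V → Set V)
    (hN : ∀ s : Finset ↥A, ((s.biUnion t : Finset V) : Set V) = N (Subtype.val '' (s : Set ↥A)))
    (hcore : ∀ S, S ⊆ A → S.ncard ≤ (N S).ncard) :
    ∀ s : Finset ↥A, s.card ≤ (s.biUnion t).card := by
  intro s
  have h1 : (Subtype.val '' (s : Set ↥A)).ncard = s.card := by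
    rw [Set.ncard_image_of_injective _ Subtype.val_injective, Set.ncard_coe_finset]
  have h2 := hcore (Subtype.val '' (s : Set ↥A)) (by rintro x ⟨a, -, rfl⟩; exact a.2)
  rw [← hN s] at h2
  rwa [h1, Set.ncard_coe_finset] at h2

private lemma has_pm_edge {V : Type*} [Fintype V] {G : SimpleGraph V} {A B : Set V}
    (hbis : BistableBipartite G A B) (hA2 : 2 ≤ stabNum G) {u v : V}
    (hu : u ∈ A) (huv : ∀ M : G.Subgraph, M.IsPerfectMatching → s(u, v) ∈ M.edgeSet) :
    False := by
  classical
  -- build a perfect matching avoiding the edge u-v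
  set t : ↥A → Finset V :=
    fun a => if (a : V) = u then (G.neighborFinset u).erase v else G.neighborFinset ↑a with ht
  have hadjt : ∀ (a : ↥A), ∀ b ∈ t a, G.Adj ↑a b := by
    intro a b hb
    by_cases h : (a : V) = u
    · rw [ht] at hb; simp only [h, if_pos] at hb
      rw [h]
      exact (mem_neighborFinset _ _ _).mp (Finset.mem_of_mem_erase hb)
    · rw [ht] at hb; simp only [h, if_neg, if_false] at hb
      exact (mem_neighborFinset _ _ _).mp hb
  have hhall : ∀ s : Finset ↥A, s.card ≤ (s.biUnion t).card := by
    apply hall_bridge t (fun S => {b | ∃ a ∈ S, G.Adj a b ∧ ¬(a = u ∧ b = v)})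
    · intro s
      ext b
      simp only [Finset.coe_biUnion, Set.mem_iUnion, Finset.mem_coe, Set.mem_setOf_eq]
      constructor
      · rintro ⟨a, ha, hb⟩
        refine ⟨↑a, ⟨a, ha, rfl⟩, ?_⟩
        by_cases h : (a : V) = u
        · rw [ht] at hb; simp only [h, if_pos] at hb
          rw [Finset.mem_erase, mem_neighborFinset] at hb
          exact ⟨by rw [h]; exact hb.2, fun hc => hb.1 hc.2⟩
        · rw [ht] at hb; simp only [h, if_neg, if_false, mem_neighborFinset] at hb
          exact ⟨hb, fun hc => h hc.1⟩
      · rintro ⟨x, ⟨a, ha, rfl⟩, hadj, hne⟩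
        refine ⟨a, ha, ?_⟩
        by_cases h : (a : V) = u
        · rw [ht]; simp only [h, if_pos]
          rw [Finset.mem_erase, mem_neighborFinset]
          exact ⟨fun hb => hne ⟨h, hb⟩, h ▸ hadj⟩
        · rw [ht]; simp only [h, if_neg, if_false, mem_neighborFinset]
          exact hadj
    · exact fun S hS => hall_core' hbis hA2 u v hS
  obtain ⟨M, hM, hMp⟩ := build hbis t hadjt hhall
  have hadjM : M.Adj u v := (SimpleGraph.Subgraph.mem_edgeSet).mp (huv M hM)
  have := hMp ⟨u, hu⟩ v hadjM
  rw [ht] at this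
  simp at this


/-- If `G` is a bistable bipartite graph with at least `4` vertices, then
the intersection of (the edge sets of) all perfect matchings of `G` is empty. -/
theorem stmt_5 {V : Type*} [Fintype V] (G : SimpleGraph V) (A B : Set V)
    (hcard : 4 ≤ Fintype.card V) (hbis : BistableBipartite G A B) :
    (⋂ M ∈ {M : G.Subgraph | M.IsPerfectMatching}, M.edgeSet) = ∅ := by
  classical
  have hA := bistable_A_card hbis
  have hB := bistable_B_card hbis
  have hcard2 : A.ncard + B.ncard = Fintype.card V := by
    rw [← Set.ncard_union_eq hbis.1.1 (Set.toFinite _) (Set.toFinite _), hbis.1.2.1,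
      Set.ncard_univ, Nat.card_eq_fintype_card]
  have hA2 : 2 ≤ stabNum G := by omega
  rw [Set.eq_empty_iff_forall_notMem]
  intro x hx
  simp only [Set.mem_iInter, Set.mem_setOf_eq] at hx
  revert hx
  induction x using Sym2.ind with
  | _ u v =>
    intro hx
    have hhall0 : ∀ s : Finset ↥A, s.card ≤ (s.biUnion (fun a => G.neighborFinset ↑a)).card := by
      apply hall_bridge _ (fun S => {b | ∃ a ∈ S, G.Adj a b})
      · intro s
        ext b
        simp only [Finset.coe_biUnion, Set.mem_iUnion, Finset.mem_coe, mem_neighborFinset,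
          Set.mem_setOf_eq]
        constructor
        · rintro ⟨a, ha, hb⟩; exact ⟨↑a, ⟨a, ha, rfl⟩, hb⟩
        · rintro ⟨y, ⟨a, ha, rfl⟩, hb⟩; exact ⟨a, ha, hb⟩
      · exact fun S hS => hall_core hbis hS
    obtain ⟨M0, hM0, -⟩ := build hbis _ (fun a b hb => (mem_neighborFinset _ _ _).mp hb) hhall0
    have hadj : G.Adj u v := M0.adj_sub ((SimpleGraph.Subgraph.mem_edgeSet).mp (hx M0 hM0))
    rcases hbis.1.2.2 hadj with ⟨hu, -⟩ | ⟨-, hv⟩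
    · exact has_pm_edge hbis hA2 hu hx
    · refine has_pm_edge (v := u) hbis hA2 hv (fun M hM => ?_)
      rw [Sym2.eq_swap]
      exact hx M hM
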